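/- A subset B ⊆ {l,r}* has an infinite antichain if and only if there exists an infinite branch, i.e., an infinite sequence of words ε = u_0 ⊑ u_1 ⊑ u_2 ⊑ … with u_{n+1} an immediate successor of u_n (obtained by appending one letter), together with infinitely many indices n_i such that u_{n_i}·a is a prefix of some v_i ∈ B for some letter a ∈ {l,r}, while u_{n_i+1} = u_{n_i}·b with b ≠ a. -/

import Mathlib

/-- An antichain for the prefix order on finite binary words. -/
def IsAnti (A : Set (List Bool)) : Prop :=
  ∀ x ∈ A, ∀ y ∈ A, x ≠ y → ¬ x <+: y ∧ ¬ y <+: x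

/-- `B` contains an infinite antichain for the prefix order. -/
def HasInfAnti (B : Set (List Bool)) : Prop :=
  ∃ A : Set (List Bool), A ⊆ B ∧ A.Infinite ∧ IsAnti A

theorem branch_len (u : ℕ → List Bool) (h0 : u 0 = [])
    (hs : ∀ n, ∃ a : Bool, u (n+1) = u n ++ [a]) : ∀ n, (u n).length = n := by
  intro n
  induction n with
  | zero => simp [h0]
  | succ n ih => obtain ⟨a, ha⟩ := hs n; simp [ha, ih]

theorem branch_mono (u : ℕ → List Bool)
    (hs : ∀ n, ∃ a : Bool, u (n+1) = u n ++ [a]) : ∀ m n, m ≤ n → u m <+: u n := by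
  intro m n h
  induction n with
  | zero => simp only [Nat.le_zero] at h; subst h; exact List.prefix_refl _
  | succ n ih =>
    rcases Nat.lt_or_ge m (n+1) with h' | h'
    · obtain ⟨a, ha⟩ := hs n
      exact (ih (Nat.lt_succ_iff.mp h')).trans (ha ▸ List.prefix_append _ _)
    · have : m = n + 1 := le_antisymm h h'
      subst this; exact List.prefix_refl _

theorem incomp {t : List Bool} {c : Bool} {x y : List Bool}
    (hx : t ++ [c] <+: x) (hy : t ++ [!c] <+: y) : ¬ x <+: y := by
  intro hxy
  have h1 : t ++ [c] <+: y := hx.trans hxy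
  have h2 := List.prefix_or_prefix_of_prefix h1 hy
  have hlen : (t ++ [c]).length = (t ++ [!c]).length := by simp
  have : t ++ [c] = t ++ [!c] := by
    rcases h2 with h | h
    · exact h.eq_of_length hlen
    · exact (h.eq_of_length hlen.symm).symm
  simp at this

theorem incomp' {t : List Bool} {c : Bool} {x y : List Bool}
    (hx : t ++ [c] <+: x) (hy : t ++ [!c] <+: y) : ¬ x <+: y ∧ ¬ y <+: x :=
  ⟨incomp hx hy, incomp hy (by rw [Bool.not_not]; exact hx)⟩

theorem stepInf (A : Set (List Bool)) (t : List Bool)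
    (h : {v ∈ A | t <+: v}.Infinite) : ∃ b : Bool, {v ∈ A | t ++ [b] <+: v}.Infinite := by
  by_contra hcon
  push_neg at hcon
  try simp only [Set.not_infinite] at hcon
  have hsub : {v ∈ A | t <+: v} ⊆
      insert t ({v ∈ A | t ++ [true] <+: v} ∪ {v ∈ A | t ++ [false] <+: v}) := by
    rintro v ⟨hv, s, rfl⟩
    cases s with
    | nil => simp
    | cons c s' =>
      right
      cases c
      · right; exact ⟨hv, ⟨s', by simp⟩⟩
      · left; exact ⟨hv, ⟨s', by simp⟩⟩
  exact h (Set.Finite.subset (((hcon true).union (hcon false)).insert t) hsub)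

/-- `B ⊆ {l,r}*` has an infinite antichain iff there is an infinite branch
`ε = u_0 ⊑ u_1 ⊑ …` (each `u_{n+1}` obtained from `u_n` by appending one letter)
together with infinitely many indices `n` such that `u_n·a` is a prefix of some
`v ∈ B` for some letter `a`, while `u_{n+1} = u_n·b` with `b ≠ a`. -/
theorem hasInfAnti_iff_branch (B : Set (List Bool)) :
    HasInfAnti B ↔
      ∃ u : ℕ → List Bool, u 0 = [] ∧ (∀ n, ∃ a : Bool, u (n + 1) = u n ++ [a]) ∧
        ∀ N : ℕ, ∃ n ≥ N, ∃ a : Bool, (∃ v ∈ B, (u n ++ [a]) <+: v) ∧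
          u (n + 1) = u n ++ [!a] := by
  constructor
  · rintro ⟨A, hAB, hAinf, hanti⟩
    have base : {v ∈ A | ([] : List Bool) <+: v}.Infinite := by
      have : {v ∈ A | ([] : List Bool) <+: v} = A := by
        ext v; simp [List.nil_prefix]
      rwa [this]
    let g : ℕ → {t : List Bool // {v ∈ A | t <+: v}.Infinite} := fun n =>
      Nat.rec ⟨[], base⟩ (fun _ p =>
        ⟨p.1 ++ [Classical.choose (stepInf A p.1 p.2)],
          Classical.choose_spec (stepInf A p.1 p.2)⟩) n
    obtain ⟨u, hu0, hstep, huinf⟩ :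
        ∃ u : ℕ → List Bool, u 0 = [] ∧ (∀ n, ∃ a : Bool, u (n + 1) = u n ++ [a]) ∧
          ∀ n, {v ∈ A | u n <+: v}.Infinite :=
      ⟨fun n => (g n).1, rfl, fun n => ⟨_, rfl⟩, fun n => (g n).2⟩
    refine ⟨u, hu0, hstep, ?_⟩
    intro N
    by_contra hno
    push_neg at hno
    have hlen := branch_len u hu0 hstep
    have key : ∀ v ∈ B, u N <+: v → v = u v.length := by
      intro v hvB hpre
      have hNlen : N ≤ v.length := by
        have := hpre.length_le; rwa [hlen N] at this
      have main : ∀ n, N ≤ n → n ≤ v.length → u n <+: v := by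
        intro n hNn
        induction n, hNn using Nat.le_induction with
        | base => intro _; exact hpre
        | succ n hNn ih =>
          intro hlen2
          obtain ⟨s, hs⟩ := ih (by omega)
          cases s with
          | nil =>
            exfalso
            have : v.length = n := by rw [← hs]; simp [hlen n]
            omega
          | cons c s' =>
            obtain ⟨b, hb⟩ := hstep n
            by_cases hcb : c = b
            · subst hcb
              rw [hb]
              exact ⟨s', by rw [← hs]; simp⟩
            · exfalso
              have hc : c = !b := by cases c <;> cases b <;> simp_all
              exact hno n hNn (!b)
                ⟨v, hvB, ⟨s', by rw [← hs, hc]; simp⟩⟩ (by rw [hb, Bool.not_not])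
      have h2 : u v.length <+: v := main v.length hNlen le_rfl
      exact (h2.eq_of_length (by rw [hlen])).symm
    obtain ⟨v, ⟨hvA, hvp⟩, w, ⟨hwA, hwp⟩, hvw⟩ := (huinf N).nontrivial
    have hv := key v (hAB hvA) hvp
    have hw := key w (hAB hwA) hwp
    rcases le_total v.length w.length with h | h
    · exact (hanti v hvA w hwA hvw).1 (by rw [hv, hw]; exact branch_mono u hstep _ _ h)
    · exact (hanti v hvA w hwA hvw).2 (by rw [hv, hw]; exact branch_mono u hstep _ _ h)
  · rintro ⟨u, hu0, hstep, hsw⟩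
    choose idx hidx a hBa hswitch using hsw
    choose v hvB hvp using hBa
    let m : ℕ → ℕ := fun i => Nat.rec 0 (fun _ prev => idx prev + 1) i
    have hm : ∀ i, m (i+1) = idx (m i) + 1 := fun i => rfl
    have hmono : ∀ i j, i < j → idx (m i) + 1 ≤ m j := by
      intro i j hij
      induction j with
      | zero => omega
      | succ j ih =>
        rcases Nat.lt_or_ge i j with h | h
        · have h1 := ih h
          have h2 : m j ≤ idx (m j) := hidx (m j)
          rw [hm]; omega
        · have : i = j := by omega
          subst this; rw [hm]
    have hincomp : ∀ i j, i < j →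
        ¬ v (m i) <+: v (m j) ∧ ¬ v (m j) <+: v (m i) := by
      intro i j hij
      apply incomp' (hvp (m i))
      have h1 : u (idx (m i) + 1) <+: u (idx (m j)) :=
        branch_mono u hstep _ _ (le_trans (hmono i j hij) (hidx (m j)))
      refine ((hswitch (m i)) ▸ h1).trans ?_
      exact (List.prefix_append _ _).trans (hvp (m j))
    have hinj : Function.Injective (fun i => v (m i)) := by
      intro i j hij
      dsimp only at hij
      by_contra hne
      rcases Nat.lt_or_ge i j with h | h
      · exact (hincomp i j h).1 (hij ▸ List.prefix_refl _)
      · have h' : j < i := by omega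
        exact (hincomp j i h').1 (hij ▸ List.prefix_refl _)
    refine ⟨Set.range (fun i => v (m i)), ?_, Set.infinite_range_of_injective hinj, ?_⟩
    · rintro x ⟨i, rfl⟩; exact hvB (m i)
    · rintro x ⟨i, rfl⟩ y ⟨j, rfl⟩ hxy
      have hij : i ≠ j := fun h => hxy (by rw [h])
      rcases Nat.lt_or_ge i j with h | h
      · exact hincomp i j h
      · have h' : j < i := by omega
        exact ⟨(hincomp j i h').2, (hincomp j i h').1⟩
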